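/- Main convergence theorem: Consider x(t+1) = x(t) + K·x̂(t) on ℝ^N with the zooming-in/zooming-out coding: x̂_j(0)=0, x̂_j(t+1) = x̂_j(t) + l_j(t+1)·q^(m)((x_j(t+1) - x̂_j(t))/l_j(t+1)), l_j(0)=l_j(1)=l₀, l_j(t+1) = k_in·l_j(t) if |x_j(t+1)-x̂_j(t)| < l_j(t+1), else k_out·l_j(t). Assume I+K is doubly stochastic with essential spectral radius ρ, 1ᵀK=0, ker K = span(1), ρ < k_in < 1, m ≥ (4+3k_in)·√N/(k_in·(k_in-ρ)), and l₀ > 2(ρ+2)‖x(0)‖/(k_in - 3√N/m). Then x(t) → x_ave(0)·1 and x̂(t) → x_ave(0)·1 as t → ∞, exponentially with rate at most k_in. -/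

import Mathlib

/-- Euclidean norm on `Fin N → ℝ`. -/
noncomputable def enorm' {N : ℕ} (v : Fin N → ℝ) : ℝ :=
  Real.sqrt (∑ i, (v i) ^ 2)

/-- The uniform quantizer `q^(m)` with `m` quantization levels on `[-1,1]`. -/
noncomputable def quant (m : ℕ) (x : ℝ) : ℝ :=
  if 1 < x then 1
  else if x < -1 then -1
  else -1 + (2 * (max (1:ℝ) (min (m:ℝ) ((⌈(m:ℝ) * (x + 1) / 2⌉ : ℤ) : ℝ))) - 1) / m

section ZoomAux

variable {N : ℕ}

lemma enorm_nonneg (v : Fin N → ℝ) : 0 ≤ enorm' v := Real.sqrt_nonneg _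

lemma enorm_eq (v : Fin N → ℝ) :
    enorm' v = ‖(WithLp.toLp 2 v : EuclideanSpace ℝ (Fin N))‖ := by
  rw [show ‖(WithLp.toLp 2 v : EuclideanSpace ℝ (Fin N))‖ =
    Real.sqrt (∑ i, ‖v i‖ ^ 2) from EuclideanSpace.norm_eq _]
  simp [enorm', Real.norm_eq_abs, sq_abs]

lemma enorm'_add_le (u v : Fin N → ℝ) : enorm' (u + v) ≤ enorm' u + enorm' v := by
  rw [enorm_eq, enorm_eq, enorm_eq]
  rw [WithLp.toLp_add]; exact norm_add_le _ _

lemma enorm'_sub_le (u v : Fin N → ℝ) : enorm' (u - v) ≤ enorm' u + enorm' v := by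
  rw [enorm_eq, enorm_eq, enorm_eq]
  rw [WithLp.toLp_sub]; exact norm_sub_le _ _

lemma abs_le_enorm (v : Fin N → ℝ) (j : Fin N) : |v j| ≤ enorm' v := by
  rw [← Real.sqrt_sq_eq_abs]
  apply Real.sqrt_le_sqrt
  exact Finset.single_le_sum (f := fun i => (v i)^2) (fun i _ => sq_nonneg _) (Finset.mem_univ j)

lemma enorm_le_of_abs_le {v : Fin N → ℝ} {c : ℝ} (hc : 0 ≤ c) (h : ∀ i, |v i| ≤ c) :
    enorm' v ≤ Real.sqrt N * c := by
  have h1 : enorm' v ≤ Real.sqrt (∑ _i : Fin N, c ^ 2) := by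
    apply Real.sqrt_le_sqrt
    apply Finset.sum_le_sum
    intro i _
    calc (v i)^2 = |v i|^2 := (sq_abs _).symm
    _ ≤ c ^ 2 := by exact pow_le_pow_left₀ (abs_nonneg _) (h i) 2
  calc enorm' v ≤ Real.sqrt (∑ _i : Fin N, c ^ 2) := h1
  _ = Real.sqrt (N * c ^ 2) := by simp [mul_comm]
  _ = Real.sqrt N * c := by
      rw [Real.sqrt_mul (Nat.cast_nonneg N), Real.sqrt_sq hc]

lemma enorm_const (c : ℝ) : enorm' (fun _ : Fin N => c) = Real.sqrt N * |c| := by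
  simp only [enorm', Finset.sum_const, Finset.card_univ, Fintype.card_fin, nsmul_eq_mul]
  rw [Real.sqrt_mul (Nat.cast_nonneg N), Real.sqrt_sq_eq_abs]

lemma abs_sum_le (v : Fin N → ℝ) : |∑ i, v i| ≤ Real.sqrt N * enorm' v := by
  rw [← Real.sqrt_sq_eq_abs]
  have h := Finset.sum_mul_sq_le_sq_mul_sq Finset.univ (fun _ : Fin N => (1:ℝ)) v
  simp only [one_mul, one_pow, Finset.sum_const, Finset.card_univ, Fintype.card_fin,
    nsmul_eq_mul, mul_one] at h
  calc Real.sqrt ((∑ i, v i)^2) ≤ Real.sqrt ((N : ℝ) * ∑ i, (v i)^2) := Real.sqrt_le_sqrt h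
  _ = Real.sqrt N * enorm' v := by rw [Real.sqrt_mul (Nat.cast_nonneg N)]; rfl

lemma stoch_contract (P : Matrix (Fin N) (Fin N) ℝ)
    (hpos : ∀ i j, 0 ≤ P i j) (hrow : ∀ i, ∑ j, P i j = 1) (hcol : ∀ j, ∑ i, P i j = 1)
    (v : Fin N → ℝ) : enorm' (P.mulVec v) ≤ enorm' v := by
  apply Real.sqrt_le_sqrt
  have key : ∀ i, (P.mulVec v i)^2 ≤ ∑ j, P i j * (v j)^2 := by
    intro i
    have h := Finset.sum_mul_sq_le_sq_mul_sq Finset.univ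
      (fun j => Real.sqrt (P i j)) (fun j => Real.sqrt (P i j) * v j)
    have e1 : ∀ j : Fin N, Real.sqrt (P i j) * (Real.sqrt (P i j) * v j) = P i j * v j := by
      intro j
      rw [← mul_assoc, Real.mul_self_sqrt (hpos i j)]
    have e2 : ∀ j : Fin N, Real.sqrt (P i j) ^ 2 = P i j := fun j => Real.sq_sqrt (hpos i j)
    have e3 : ∀ j : Fin N, (Real.sqrt (P i j) * v j) ^ 2 = P i j * (v j)^2 := by
      intro j; rw [mul_pow, e2]
    simp only [e1] at h
    calc (P.mulVec v i)^2 = (∑ j, P i j * v j)^2 := by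
          simp [Matrix.mulVec, dotProduct]
    _ ≤ (∑ j, Real.sqrt (P i j) ^ 2) * ∑ j, (Real.sqrt (P i j) * v j) ^ 2 := h
    _ = (∑ j, P i j) * ∑ j, P i j * (v j)^2 := by
          rw [Finset.sum_congr rfl (fun j _ => e2 j), Finset.sum_congr rfl (fun j _ => e3 j)]
    _ = ∑ j, P i j * (v j)^2 := by rw [hrow i, one_mul]
  calc ∑ i, (P.mulVec v i)^2 ≤ ∑ i, ∑ j, P i j * (v j)^2 :=
        Finset.sum_le_sum (fun i _ => key i)
  _ = ∑ j, (∑ i, P i j) * (v j)^2 := by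
        rw [Finset.sum_comm]
        exact Finset.sum_congr rfl (fun j _ => (Finset.sum_mul _ _ _).symm)
  _ = ∑ j, (v j)^2 := by simp [hcol]

lemma quant_err {m : ℕ} (hm : 1 ≤ m) {u : ℝ} (hu : |u| ≤ 1) :
    |u - quant m u| ≤ 1 / m := by
  have hu1 : ¬ 1 < u := not_lt.2 (abs_le.1 hu).2
  have hu2 : ¬ u < -1 := not_lt.2 (abs_le.1 hu).1
  rw [quant, if_neg hu1, if_neg hu2]
  have hm0 : (0:ℝ) < m := by exact_mod_cast hm
  set z : ℝ := (m:ℝ) * (u + 1) / 2 with hz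
  have hz0 : 0 ≤ z := by
    apply div_nonneg _ (by norm_num)
    exact mul_nonneg hm0.le (by linarith [(abs_le.1 hu).1])
  have hzm : z ≤ (m:ℝ) := by
    rw [hz, div_le_iff₀ (by norm_num : (0:ℝ) < 2)]
    nlinarith [(abs_le.1 hu).2, hm0]
  have hceil_le : ((⌈z⌉ : ℤ) : ℝ) ≤ (m:ℝ) := by
    exact_mod_cast Int.ceil_le.2 (by exact_mod_cast hzm)
  have hmin : min (m:ℝ) ((⌈z⌉ : ℤ) : ℝ) = ((⌈z⌉ : ℤ) : ℝ) := min_eq_right hceil_le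
  rw [hmin]
  set c : ℝ := max (1:ℝ) ((⌈z⌉ : ℤ) : ℝ) with hc
  have hzc : z ≤ c := le_trans (Int.le_ceil z) (le_max_right _ _)
  have hcz : c - 1 ≤ z := by
    rcases max_cases (1:ℝ) ((⌈z⌉ : ℤ) : ℝ) with ⟨h1, _⟩ | ⟨h1, _⟩
    · rw [hc, h1]; linarith
    · rw [hc, h1]; linarith [Int.ceil_lt_add_one z]
  have hu_eq : u + 1 = 2 * z / m := by
    rw [hz]; field_simp
  have key : u - (-1 + (2 * c - 1) / m) = (2 * z - 2 * c + 1) / m := by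
    have hmne : (m:ℝ) ≠ 0 := ne_of_gt hm0
    field_simp
    nlinarith [hu_eq, hm0]
  rw [key, abs_div, abs_of_pos hm0]
  apply div_le_div_of_nonneg_right ?_ ?_ |>.trans_eq rfl
  · rw [abs_le]; constructor <;> linarith
  · exact hm0.le

end ZoomAux

set_option maxHeartbeats 1000000 in
/-- Main convergence theorem for the zooming-in/zooming-out average consensus
algorithm (Theorem 1 of the paper). -/
theorem zooming_convergence (N : ℕ) (hN : 1 ≤ N)
    (K : Matrix (Fin N) (Fin N) ℝ)
    -- P = I + K is doubly stochastic
    (hpos : ∀ i j, 0 ≤ (1 + K) i j)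
    (hrow : ∀ i, ∑ j, (1 + K) i j = 1)
    (hcol : ∀ j, ∑ i, (1 + K) i j = 1)
    (hK1 : Matrix.vecMul (fun _ => (1:ℝ)) K = 0)
    (hker : ∀ v : Fin N → ℝ, K.mulVec v = 0 ↔ ∃ c : ℝ, v = fun _ => c)
    -- ρ is the essential spectral radius of P = I + K
    (ρ : ℝ) (hρ0 : 0 ≤ ρ)
    (hρ : ∀ v : Fin N → ℝ, (∑ i, v i) = 0 → enorm' ((1 + K).mulVec v) ≤ ρ * enorm' v)
    -- parameters
    (kin kout : ℝ) (m : ℕ) (l₀ : ℝ)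
    (hρk : ρ < kin) (hk1 : kin < 1) (hkout : 1 < kout)
    (hm : (m : ℝ) ≥ (4 + 3 * kin) * Real.sqrt N / (kin * (kin - ρ)))
    -- state, estimates and scaling factors
    (x xhat : ℕ → Fin N → ℝ) (l : ℕ → Fin N → ℝ)
    (hl₀ : l₀ > 2 * (ρ + 2) * enorm' (x 0) / (kin - 3 * Real.sqrt N / m))
    (hx : ∀ t, x (t + 1) = x t + K.mulVec (xhat t))
    (hxhat0 : xhat 0 = 0)
    (hxhat : ∀ t j, xhat (t + 1) j =
      xhat t j + l (t + 1) j * quant m ((x (t + 1) j - xhat t j) / l (t + 1) j))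
    (hl0 : ∀ j, l 0 j = l₀) (hl1 : ∀ j, l 1 j = l₀)
    (hlrec : ∀ t j, 1 ≤ t →
      l (t + 1) j = if |x (t + 1) j - xhat t j| < kin * l t j
        then kin * l t j else kout * l t j) :
    ∃ C : ℝ, 0 < C ∧ ∀ t,
      enorm' (x t - fun _ => (N : ℝ)⁻¹ * ∑ i, x 0 i) ≤ C * kin ^ t ∧
      enorm' (xhat t - fun _ => (N : ℝ)⁻¹ * ∑ i, x 0 i) ≤ C * kin ^ t := by
  classical
  -- basic positivity facts
  have hN0 : (0:ℝ) < N := by exact_mod_cast hN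
  have hsN : (0:ℝ) < Real.sqrt N := Real.sqrt_pos.2 hN0
  have hkin0 : (0:ℝ) < kin := lt_of_le_of_lt hρ0 hρk
  have hkρ : (0:ℝ) < kin - ρ := by linarith
  have hm0 : (0:ℝ) < m := by
    refine lt_of_lt_of_le ?_ hm
    apply div_pos
    · nlinarith
    · positivity
  have hm1 : 1 ≤ m := by exact_mod_cast Nat.one_le_iff_ne_zero.2 (by
    intro h; rw [h] at hm0; norm_num at hm0)
  set u : ℝ := Real.sqrt N / m with hu_def
  have hu_pos : 0 < u := div_pos hsN hm0
  have hu_mul : u * (4 + 3 * kin) ≤ kin * (kin - ρ) := by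
    have h1 : (4 + 3 * kin) * Real.sqrt N ≤ (m:ℝ) * (kin * (kin - ρ)) := by
      rw [ge_iff_le, div_le_iff₀ (by positivity)] at hm
      exact hm
    rw [hu_def, div_mul_eq_mul_div, div_le_iff₀ hm0]
    nlinarith [h1]
  have h3u : 3 * u < kin := by
    nlinarith [hu_mul, hu_pos, hρ0, hkin0]
  have hu1 : u ≤ 1 := by linarith
  have hden : (0:ℝ) < kin - 3 * u := by linarith
  have hl₀' : 2 * (ρ + 2) * enorm' (x 0) < l₀ * (kin - 3 * u) := by
    have h3 : kin - 3 * Real.sqrt N / m = kin - 3 * u := by rw [hu_def]; ring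
    rw [gt_iff_lt, h3, div_lt_iff₀ hden] at hl₀
    exact hl₀
  have hx0nn : 0 ≤ enorm' (x 0) := enorm_nonneg _
  have hl₀pos : 0 < l₀ := by nlinarith
  have hX0 : enorm' (x 0) ≤ l₀ := by nlinarith
  -- the constant α
  set α : ℝ := max (2 * Real.sqrt N / (m * (kin - ρ))) (2 * enorm' (x 0) / l₀) with hα_def
  have hα1 : 2 * Real.sqrt N / (m * (kin - ρ)) ≤ α := le_max_left _ _
  have hα2 : 2 * enorm' (x 0) / l₀ ≤ α := le_max_right _ _
  have hαpos : 0 < α := lt_of_lt_of_le (by positivity) hα1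
  have hα2' : 2 * enorm' (x 0) ≤ α * l₀ := by
    rw [div_le_iff₀ hl₀pos] at hα2; linarith
  have hα1' : 2 * u ≤ α * (kin - ρ) := by
    rw [div_le_iff₀ (by positivity)] at hα1
    rw [hu_def, show 2 * (Real.sqrt N / m) = 2 * Real.sqrt N / m from by ring,
      div_le_iff₀ hm0]
    nlinarith [hα1]
  have hstepρ : ρ * α + 2 * u ≤ kin * α := by nlinarith [hα1']
  have hstep2 : (1 + ρ) * α + 3 * u < kin := by
    have hmul : ∀ β : ℝ, (1 + ρ) * β + 3 * u < kin ↔ ((1 + ρ) * β + 3 * u) * (kin - ρ) < kin * (kin - ρ) :=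
      fun β => (mul_lt_mul_iff_left₀ hkρ).symm
    rcases max_cases (2 * Real.sqrt N / (m * (kin - ρ))) (2 * enorm' (x 0) / l₀) with
      ⟨h1, _⟩ | ⟨h1, _⟩ <;> rw [hα_def, h1]
    · rw [hmul]
      have hA : 2 * Real.sqrt N / (↑m * (kin - ρ)) * (kin - ρ) = 2 * u := by
        rw [hu_def]; field_simp
      have hexp : ((1 + ρ) * (2 * Real.sqrt N / (↑m * (kin - ρ))) + 3 * u) * (kin - ρ) =
          (1 + ρ) * (2 * Real.sqrt N / (↑m * (kin - ρ)) * (kin - ρ)) + 3 * u * (kin - ρ) := by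
        ring
      rw [hexp, hA]
      nlinarith [hu_mul, hu_pos, mul_nonneg hρ0 hu_pos.le]
    · have hB : 2 * enorm' (x 0) / l₀ * l₀ = 2 * enorm' (x 0) :=
        div_mul_cancel₀ _ (ne_of_gt hl₀pos)
      have h2 : ((1 + ρ) * (2 * enorm' (x 0) / l₀) + 3 * u) * l₀ < kin * l₀ := by
        nlinarith [hB, hl₀', hx0nn, hρ0]
      exact (mul_lt_mul_iff_left₀ hl₀pos).mp h2
  -- structural facts about K
  have hKrow : ∀ i, ∑ j, K i j = 0 := by
    intro i
    have h := hrow i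
    simp only [Matrix.add_apply] at h
    rw [Finset.sum_add_distrib] at h
    have h1 : ∑ j, (1 : Matrix (Fin N) (Fin N) ℝ) i j = 1 := by
      simp [Matrix.one_apply]
    rw [h1] at h; linarith
  have hKcol : ∀ j, ∑ i, K i j = 0 := by
    intro j
    have h := congrFun hK1 j
    simpa [Matrix.vecMul, dotProduct] using h
  have hKconst : ∀ c : ℝ, K.mulVec (fun _ => c) = 0 := by
    intro c; funext i
    simp only [Matrix.mulVec, dotProduct, Pi.zero_apply]
    rw [← Finset.sum_mul, hKrow i, zero_mul]
  have hKsum : ∀ v : Fin N → ℝ, ∑ i, K.mulVec v i = 0 := by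
    intro v
    simp only [Matrix.mulVec, dotProduct]
    rw [Finset.sum_comm]
    apply Finset.sum_eq_zero
    intro j _
    rw [← Finset.sum_mul, hKcol j, zero_mul]
  have hKmul : ∀ v : Fin N → ℝ, enorm' (K.mulVec v) ≤ 2 * enorm' v := by
    intro v
    have hPv := stoch_contract (1 + K) hpos hrow hcol v
    have hEq : K.mulVec v = (1 + K).mulVec v - v := by
      rw [Matrix.add_mulVec, Matrix.one_mulVec]; abel
    rw [hEq]
    calc enorm' ((1 + K).mulVec v - v) ≤ enorm' ((1 + K).mulVec v) + enorm' v :=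
          enorm'_sub_le _ _
    _ ≤ 2 * enorm' v := by linarith
  -- the average
  set a : ℝ := (N : ℝ)⁻¹ * ∑ i, x 0 i with ha_def
  have hsum_x : ∀ t, ∑ i, x t i = ∑ i, x 0 i := by
    intro t
    induction t with
    | zero => rfl
    | succ t ih =>
      rw [hx t]
      simp only [Pi.add_apply]
      rw [Finset.sum_add_distrib, ih, hKsum, add_zero]
  have hsum_y : ∀ t, ∑ i, (x t i - a) = 0 := by
    intro t
    rw [Finset.sum_sub_distrib, hsum_x t]
    simp only [Finset.sum_const, Finset.card_univ, Fintype.card_fin, nsmul_eq_mul, ha_def]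
    field_simp; ring
  have hA : enorm' (fun _ : Fin N => a) ≤ enorm' (x 0) := by
    have h1 := abs_sum_le (x 0)
    have h2 : Real.sqrt N * Real.sqrt N = N := Real.mul_self_sqrt hN0.le
    rw [enorm_const]
    have h3 : |a| ≤ (N:ℝ)⁻¹ * (Real.sqrt N * enorm' (x 0)) := by
      rw [ha_def, abs_mul, abs_of_pos (inv_pos.2 hN0)]
      exact mul_le_mul_of_nonneg_left h1 (inv_pos.2 hN0).le
    calc Real.sqrt N * |a| ≤ Real.sqrt N * ((N:ℝ)⁻¹ * (Real.sqrt N * enorm' (x 0))) :=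
          mul_le_mul_of_nonneg_left h3 hsN.le
    _ = (Real.sqrt N * Real.sqrt N) * ((N:ℝ)⁻¹ * enorm' (x 0)) := by ring
    _ = enorm' (x 0) := by rw [h2]; field_simp
  -- key decomposition of K·x̂
  have key : ∀ t, K.mulVec (xhat t) =
      K.mulVec (fun j => x t j - a) - K.mulVec (fun j => x t j - xhat t j) := by
    intro t
    rw [← Matrix.mulVec_sub]
    have hsplit : xhat t =
        ((fun j => x t j - a) - fun j => x t j - xhat t j) + (fun _ => a) := by
      funext j; simp only [Pi.add_apply, Pi.sub_apply]; ring
    conv_lhs => rw [hsplit]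
    rw [Matrix.mulVec_add, hKconst, add_zero]
  -- bound 1 : contraction of y
  have Bd1 : ∀ t, enorm' (fun j => x (t+1) j - a) ≤
      ρ * enorm' (fun j => x t j - a) + 2 * enorm' (fun j => x t j - xhat t j) := by
    intro t
    have hfun : (fun j => x (t+1) j - a) =
        (1 + K).mulVec (fun j => x t j - a) - K.mulVec (fun j => x t j - xhat t j) := by
      funext j
      have kj := congrFun (key t) j
      simp only [Pi.sub_apply] at kj ⊢
      have hxj := congrFun (hx t) j
      simp only [Pi.add_apply] at hxj
      rw [hxj, Matrix.add_mulVec, Matrix.one_mulVec]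
      simp only [Pi.add_apply]
      rw [kj]; ring
    rw [hfun]
    calc enorm' ((1 + K).mulVec (fun j => x t j - a) - K.mulVec (fun j => x t j - xhat t j))
        ≤ enorm' ((1 + K).mulVec (fun j => x t j - a)) +
          enorm' (K.mulVec (fun j => x t j - xhat t j)) := enorm'_sub_le _ _
    _ ≤ ρ * enorm' (fun j => x t j - a) + 2 * enorm' (fun j => x t j - xhat t j) :=
          add_le_add (hρ _ (hsum_y t)) (hKmul _)
  -- bound 2 : the quantizer input
  have Bd2 : ∀ t j, |x (t+1) j - xhat t j| ≤
      (1 + ρ) * enorm' (fun j => x t j - a) + 3 * enorm' (fun j => x t j - xhat t j) := by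
    intro t j
    have hfun : (fun j => x (t+1) j - xhat t j) =
        K.mulVec (fun j => x t j - a) +
          ((fun j => x t j - xhat t j) - K.mulVec (fun j => x t j - xhat t j)) := by
      funext i
      have ki := congrFun (key t) i
      simp only [Pi.sub_apply] at ki
      have hxi := congrFun (hx t) i
      simp only [Pi.add_apply] at hxi
      simp only [Pi.add_apply, Pi.sub_apply]
      rw [hxi, ki]; ring
    have h1 : |x (t+1) j - xhat t j| ≤ enorm' (fun j => x (t+1) j - xhat t j) :=
      abs_le_enorm (fun j => x (t+1) j - xhat t j) j
    have hKy : enorm' (K.mulVec (fun j => x t j - a)) ≤ (1 + ρ) * enorm' (fun j => x t j - a) := by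
      have hEq : K.mulVec (fun j => x t j - a) =
          (1 + K).mulVec (fun j => x t j - a) - (fun j => x t j - a) := by
        rw [Matrix.add_mulVec, Matrix.one_mulVec]; abel
      rw [hEq]
      calc enorm' ((1 + K).mulVec (fun j => x t j - a) - fun j => x t j - a)
          ≤ enorm' ((1 + K).mulVec (fun j => x t j - a)) + enorm' (fun j => x t j - a) :=
            enorm'_sub_le _ _
      _ ≤ (1 + ρ) * enorm' (fun j => x t j - a) := by
            have := hρ _ (hsum_y t); linarith
    have h2 : enorm' (fun j => x (t+1) j - xhat t j) ≤
        (1 + ρ) * enorm' (fun j => x t j - a) + 3 * enorm' (fun j => x t j - xhat t j) := by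
      rw [hfun]
      calc enorm' (K.mulVec (fun j => x t j - a) +
            ((fun j => x t j - xhat t j) - K.mulVec (fun j => x t j - xhat t j)))
          ≤ enorm' (K.mulVec (fun j => x t j - a)) +
            enorm' ((fun j => x t j - xhat t j) - K.mulVec (fun j => x t j - xhat t j)) :=
            enorm'_add_le _ _
      _ ≤ enorm' (K.mulVec (fun j => x t j - a)) +
            (enorm' (fun j => x t j - xhat t j) +
              enorm' (K.mulVec (fun j => x t j - xhat t j))) := by
            have := enorm'_sub_le (fun j => x t j - xhat t j)
              (K.mulVec (fun j => x t j - xhat t j))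
            linarith
      _ ≤ (1 + ρ) * enorm' (fun j => x t j - a) + 3 * enorm' (fun j => x t j - xhat t j) := by
            have := hKmul (fun j => x t j - xhat t j); linarith
    exact le_trans h1 h2
  -- bound on the coding error from the quantizer
  have hE : ∀ t, (∀ j, 0 < l (t+1) j) → (∀ j, |x (t+1) j - xhat t j| ≤ l (t+1) j) →
      ∀ j, |x (t+1) j - xhat (t+1) j| ≤ l (t+1) j / m := by
    intro t hp hb j
    have hL : 0 < l (t+1) j := hp j
    have hsplit : x (t+1) j - xhat (t+1) j =
        l (t+1) j * ((x (t+1) j - xhat t j) / l (t+1) j -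
          quant m ((x (t+1) j - xhat t j) / l (t+1) j)) := by
      rw [hxhat t j]; field_simp; ring
    rw [hsplit, abs_mul, abs_of_pos hL]
    have hq : |(x (t+1) j - xhat t j) / l (t+1) j| ≤ 1 := by
      rw [abs_div, abs_of_pos hL, div_le_one hL]
      exact hb j
    have := quant_err hm1 hq
    calc l (t+1) j * |(x (t+1) j - xhat t j) / l (t+1) j -
          quant m ((x (t+1) j - xhat t j) / l (t+1) j)| ≤ l (t+1) j * (1 / m) :=
          mul_le_mul_of_nonneg_left this hL.le
    _ = l (t+1) j / m := by ring
  -- main induction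
  have main : ∀ t : ℕ, (∀ j, l (t+1) j = l₀ * kin ^ t) ∧
      (∀ j, |x (t+1) j - xhat t j| ≤ l₀ * kin ^ t) ∧
      enorm' (fun j => x (t+1) j - a) ≤ α * (l₀ * kin ^ t) := by
    intro t
    induction t with
    | zero =>
      have hx1 : x 1 = x 0 := by
        rw [hx 0, hxhat0, Matrix.mulVec_zero, add_zero]
      refine ⟨fun j => by simpa using hl1 j, ?_, ?_⟩
      · intro j
        rw [hx1, hxhat0]
        simp only [Pi.zero_apply, sub_zero, pow_zero, mul_one]
        exact le_trans (abs_le_enorm (x 0) j) hX0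
      · simp only [pow_zero, mul_one]
        have h0 : (fun j => x 1 j - a) = x 0 - (fun _ => a) := by
          funext j; rw [hx1]; rfl
        rw [h0]
        calc enorm' (x 0 - fun _ => a) ≤ enorm' (x 0) + enorm' (fun _ : Fin N => a) :=
              enorm'_sub_le _ _
        _ ≤ 2 * enorm' (x 0) := by linarith
        _ ≤ α * l₀ := hα2'
    | succ t ih =>
      obtain ⟨ha1, hb1, hc1⟩ := ih
      set L : ℝ := l₀ * kin ^ t with hL_def
      have hLpos : 0 < L := by positivity
      have hLp : ∀ j, 0 < l (t+1) j := fun j => by rw [ha1 j]; exact hLpos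
      have he : ∀ j, |x (t+1) j - xhat (t+1) j| ≤ L / m := by
        intro j
        have := hE t hLp (fun j => by rw [ha1 j]; exact hb1 j) j
        rwa [ha1 j] at this
      have henorm_e : enorm' (fun j => x (t+1) j - xhat (t+1) j) ≤ u * L := by
        have h1 : enorm' (fun j => x (t+1) j - xhat (t+1) j) ≤
            Real.sqrt N * (L / m) := enorm_le_of_abs_le (by positivity) he
        calc enorm' (fun j => x (t+1) j - xhat (t+1) j) ≤ Real.sqrt N * (L / m) := h1
        _ = u * L := by rw [hu_def]; ring
      have hdlt : ∀ j, |x (t+1+1) j - xhat (t+1) j| < kin * L := by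
        intro j
        calc |x (t+1+1) j - xhat (t+1) j| ≤
            (1 + ρ) * enorm' (fun j => x (t+1) j - a) +
              3 * enorm' (fun j => x (t+1) j - xhat (t+1) j) := Bd2 (t+1) j
        _ ≤ (1 + ρ) * (α * L) + 3 * (u * L) := by
              apply add_le_add
              · exact mul_le_mul_of_nonneg_left hc1 (by linarith)
              · linarith [henorm_e]
        _ = ((1 + ρ) * α + 3 * u) * L := by ring
        _ < kin * L := by
              exact mul_lt_mul_of_pos_right hstep2 hLpos
      have hlnext : ∀ j, l (t+1+1) j = l₀ * kin ^ (t+1) := by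
        intro j
        rw [hlrec (t+1) j (Nat.le_add_left 1 t), if_pos (by rw [ha1 j]; exact hdlt j), ha1 j]
        ring
      refine ⟨hlnext, ?_, ?_⟩
      · intro j
        have := hdlt j
        have hLL : kin * L = l₀ * kin ^ (t+1) := by rw [hL_def]; ring
        linarith [this, hLL]
      · calc enorm' (fun j => x (t+1+1) j - a) ≤
            ρ * enorm' (fun j => x (t+1) j - a) +
              2 * enorm' (fun j => x (t+1) j - xhat (t+1) j) := Bd1 (t+1)
        _ ≤ ρ * (α * L) + 2 * (u * L) := by
              apply add_le_add
              · exact mul_le_mul_of_nonneg_left hc1 hρ0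
              · linarith [henorm_e]
        _ = (ρ * α + 2 * u) * L := by ring
        _ ≤ (kin * α) * L := mul_le_mul_of_nonneg_right hstepρ hLpos.le
        _ = α * (l₀ * kin ^ (t+1)) := by rw [hL_def]; ring
  -- assemble the constant
  set C : ℝ := 2 * enorm' (x 0) + (α + 1) * l₀ / kin + 1 with hC_def
  have hdivpos : 0 < (α + 1) * l₀ / kin := by positivity
  have hCpos : 0 < C := by rw [hC_def]; linarith
  have hCk : (α + 1) * l₀ ≤ C * kin := by
    have h1 : (α + 1) * l₀ / kin * kin = (α + 1) * l₀ :=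
      div_mul_cancel₀ _ (ne_of_gt hkin0)
    have h2 : C * kin = (2 * enorm' (x 0) + 1) * kin + (α + 1) * l₀ := by
      rw [hC_def, add_mul, add_mul, h1]; ring
    nlinarith [h2, mul_pos (show (0:ℝ) < 2 * enorm' (x 0) + 1 by linarith) hkin0]
  have hC2 : 2 * enorm' (x 0) ≤ C := by
    rw [hC_def]; linarith
  refine ⟨C, hCpos, ?_⟩
  intro t
  match t with
  | 0 =>
    constructor
    · calc enorm' (x 0 - fun _ => (N:ℝ)⁻¹ * ∑ i, x 0 i)
          ≤ enorm' (x 0) + enorm' (fun _ : Fin N => a) := enorm'_sub_le _ _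
      _ ≤ 2 * enorm' (x 0) := by linarith
      _ ≤ C * kin ^ 0 := by rw [pow_zero, mul_one]; linarith [hC2]
    · rw [hxhat0]
      have h0 : ((0 : Fin N → ℝ) - fun _ => (N:ℝ)⁻¹ * ∑ i, x 0 i) = (fun _ : Fin N => -a) := by
        funext j; simp [ha_def]
      rw [h0, enorm_const, abs_neg]
      calc Real.sqrt N * |a| = enorm' (fun _ : Fin N => a) := (enorm_const a).symm
      _ ≤ enorm' (x 0) := hA
      _ ≤ C * kin ^ 0 := by rw [pow_zero, mul_one]; linarith [hC2, hx0nn]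
  | (s+1) =>
    obtain ⟨ha1, hb1, hc1⟩ := main s
    have hks : (0:ℝ) < kin ^ s := pow_pos hkin0 s
    have hαl : α * l₀ ≤ C * kin := by nlinarith [hCk, hl₀pos]
    constructor
    · have h0 : (x (s+1) - fun _ => (N:ℝ)⁻¹ * ∑ i, x 0 i) = (fun j => x (s+1) j - a) := by
        funext j; rfl
      rw [h0]
      calc enorm' (fun j => x (s+1) j - a) ≤ α * (l₀ * kin ^ s) := hc1
      _ = (α * l₀) * kin ^ s := by ring
      _ ≤ (C * kin) * kin ^ s := mul_le_mul_of_nonneg_right hαl hks.le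
      _ = C * kin ^ (s+1) := by ring
    · set L : ℝ := l₀ * kin ^ s with hL_def
      have hLpos : 0 < L := by positivity
      have hLp : ∀ j, 0 < l (s+1) j := fun j => by rw [ha1 j]; exact hLpos
      have he : ∀ j, |x (s+1) j - xhat (s+1) j| ≤ L / m := by
        intro j
        have := hE s hLp (fun j => by rw [ha1 j]; exact hb1 j) j
        rwa [ha1 j] at this
      have henorm_e : enorm' (fun j => x (s+1) j - xhat (s+1) j) ≤ u * L := by
        have h1 : enorm' (fun j => x (s+1) j - xhat (s+1) j) ≤
            Real.sqrt N * (L / m) := enorm_le_of_abs_le (by positivity) he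
        calc enorm' (fun j => x (s+1) j - xhat (s+1) j) ≤ Real.sqrt N * (L / m) := h1
        _ = u * L := by rw [hu_def]; ring
      have h0 : (xhat (s+1) - fun _ => (N:ℝ)⁻¹ * ∑ i, x 0 i) =
          (fun j => x (s+1) j - a) - (fun j => x (s+1) j - xhat (s+1) j) := by
        funext j; simp only [Pi.sub_apply]; ring
      rw [h0]
      calc enorm' ((fun j => x (s+1) j - a) - fun j => x (s+1) j - xhat (s+1) j)
          ≤ enorm' (fun j => x (s+1) j - a) +
            enorm' (fun j => x (s+1) j - xhat (s+1) j) := enorm'_sub_le _ _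
      _ ≤ α * L + u * L := add_le_add hc1 henorm_e
      _ ≤ (α + 1) * L := by nlinarith [hu1, hLpos]
      _ = ((α + 1) * l₀) * kin ^ s := by rw [hL_def]; ring
      _ ≤ (C * kin) * kin ^ s := mul_le_mul_of_nonneg_right hCk hks.le
      _ = C * kin ^ (s+1) := by ring
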